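/- Let g ∈ ℬ([0,∞)ⁿ). Then for each b > 0 the series Σ_{j∈ℤ₊ⁿ} e^{(g[e])*(j)} / (b^{|j|} j!) and Σ_{j∈ℤ₊ⁿ} e^{(g[e])*(j)} / (b^{|j|} |j|!) converge, where for a multi-index j = (j₁,…,jₙ) ∈ ℤ₊ⁿ, |j| = j₁+…+jₙ and j! = j₁!···jₙ!. -/

import Mathlib

open Filter
open scoped BigOperators Topology

noncomputable section

abbrev En (n : ℕ) := EuclideanSpace ℝ (Fin n)

/-- The closed positive orthant `[0,∞)ⁿ`. -/
def orthant (n : ℕ) : Set (En n) := {x | ∀ j, 0 ≤ x j}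

/-- `g[e]`, the coordinatewise exponential substitution `g[e](x) = g(e^{x₁},…,e^{xₙ})`. -/
def expComp {n : ℕ} (g : En n → ℝ) : En n → ℝ := fun x => g (WithLp.toLp 2 (fun j => Real.exp (x j)))

/-- The Young–Fenchel conjugate `g*(x) = sup_y (⟨x,y⟩ - g(y))`. -/
def starC {n : ℕ} (g : En n → ℝ) (x : En n) : ℝ := ⨆ y : En n, (∑ j, x j * y j - g y)

/-- `g ∈ ℬ([0,∞)ⁿ)`: `g` is continuous on the orthant and `g(x)/‖x‖ → +∞`
as `x → ∞` within the orthant. -/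
def memB {n : ℕ} (g : En n → ℝ) : Prop :=
  ContinuousOn g (orthant n) ∧
    Tendsto (fun x : En n => g x / ‖x‖) (cocompact (En n) ⊓ 𝓟 (orthant n)) atTop

/-- `k^k ≤ e^k k!` (weak Stirling lower bound). -/
lemma aux_pow_le_exp_mul_factorial (k : ℕ) :
    (k : ℝ) ^ k ≤ Real.exp k * (Nat.factorial k : ℝ) := by
  have h1 : ((k : ℝ) ^ k / (Nat.factorial k : ℝ)) ≤
      ∑ i ∈ Finset.range (k + 1), (k : ℝ) ^ i / (Nat.factorial i : ℝ) := by
    refine Finset.single_le_sum (f := fun i => (k : ℝ) ^ i / (Nat.factorial i : ℝ))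
      (fun i _ => by positivity) (Finset.self_mem_range_succ k)
  have h2 := Real.sum_le_exp_of_nonneg (x := (k : ℝ)) (Nat.cast_nonneg k) (k + 1)
  have hfac : (0 : ℝ) < (Nat.factorial k : ℝ) := by
    exact_mod_cast Nat.factorial_pos k
  rw [div_le_iff₀ hfac] at h1
  calc (k : ℝ) ^ k ≤ (∑ i ∈ Finset.range (k + 1), (k : ℝ) ^ i / (Nat.factorial i : ℝ))
        * (Nat.factorial k : ℝ) := h1
    _ ≤ Real.exp k * (Nat.factorial k : ℝ) := by
        apply mul_le_mul_of_nonneg_right _ hfac.le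
        simpa using h2

/-- `a y - c e^y ≤ a log a - a - a log c`. -/
lemma aux_linear_sub_exp (a c y : ℝ) (ha : 0 ≤ a) (hc : 0 < c) :
    a * y - c * Real.exp y ≤ a * Real.log a - a - a * Real.log c := by
  rcases eq_or_lt_of_le ha with h0 | ha'
  · have := Real.exp_pos y
    simp only [← h0, zero_mul, zero_sub, sub_zero]
    nlinarith
  · have hkey : c * Real.exp y = a * Real.exp (y - Real.log (a / c)) := by
      rw [Real.exp_sub, Real.exp_log (by positivity)]
      field_simp
    have h1 := Real.add_one_le_exp (y - Real.log (a / c))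
    have h2 : Real.log (a / c) = Real.log a - Real.log c :=
      Real.log_div (ne_of_gt ha') (ne_of_gt hc)
    nlinarith [mul_le_mul_of_nonneg_left h1 ha]

/-- `exp (k log k - k - k log c) ≤ k! (1/c)^k`. -/
lemma aux_exp_phi_le (c : ℝ) (hc : 0 < c) (k : ℕ) :
    Real.exp ((k : ℝ) * Real.log k - k - (k : ℝ) * Real.log c) ≤
      (Nat.factorial k : ℝ) * (1 / c) ^ k := by
  rcases Nat.eq_zero_or_pos k with rfl | hk
  · simp
  have hk0 : (0 : ℝ) < (k : ℝ) := by exact_mod_cast hk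
  have h1 : Real.exp ((k : ℝ) * Real.log k - k - (k : ℝ) * Real.log c) =
      (k : ℝ) ^ k / Real.exp k / c ^ k := by
    rw [Real.exp_sub, Real.exp_sub, Real.exp_nat_mul, Real.exp_nat_mul,
      Real.exp_log hk0, Real.exp_log hc]
  rw [h1]
  have hfac := aux_pow_le_exp_mul_factorial k
  have hek : (0 : ℝ) < Real.exp k := Real.exp_pos _
  have hck : (0 : ℝ) < c ^ k := by positivity
  rw [div_div, div_le_iff₀ (by positivity)]
  calc (k : ℝ) ^ k ≤ Real.exp k * (Nat.factorial k : ℝ) := hfac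
    _ = (Nat.factorial k : ℝ) * (1 / c) ^ k * (Real.exp ↑k * c ^ k) := by
        rw [one_div, inv_pow]
        field_simp

/-- coordinates are bounded by the Euclidean norm. -/
lemma aux_coord_le_norm {n : ℕ} (x : En n) (i : Fin n) : |x i| ≤ ‖x‖ := by
  rw [EuclideanSpace.norm_eq]
  have h1 : |x i| = Real.sqrt ((x i) ^ 2) := (Real.sqrt_sq_eq_abs _).symm
  rw [h1]
  apply Real.sqrt_le_sqrt
  have : (x i) ^ 2 = ‖x i‖ ^ 2 := by rw [Real.norm_eq_abs, sq_abs]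
  rw [this]
  exact Finset.single_le_sum (f := fun j => ‖x j‖ ^ 2) (fun j _ => by positivity)
    (Finset.mem_univ i)

/-- Summability of the multi-geometric series on `Fin n → ℕ`. -/
lemma aux_geom_summable (n : ℕ) {r : ℝ} (hr0 : 0 ≤ r) (hr1 : r < 1) :
    Summable (fun j : Fin n → ℕ => ∏ i, r ^ j i) := by
  induction n with
  | zero =>
      haveI : Finite (Fin 0 → ℕ) := by infer_instance
      exact Summable.of_finite
  | succ n ih =>
      have hgeo : Summable (fun k : ℕ => r ^ k) := summable_geometric_of_lt_one hr0 hr1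
      have hprod : Summable (fun p : ℕ × (Fin n → ℕ) => r ^ p.1 * ∏ i, r ^ p.2 i) :=
        Summable.mul_of_nonneg (f := fun k : ℕ => r ^ k)
          (g := fun j : Fin n → ℕ => ∏ i, r ^ j i) hgeo ih
          (fun k => pow_nonneg hr0 k) (fun j => Finset.prod_nonneg fun i _ => pow_nonneg hr0 _)
      have hinj : Function.Injective
          (fun j : Fin (n+1) → ℕ => ((j 0, fun i : Fin n => j i.succ) : ℕ × (Fin n → ℕ))) := by
        intro a b hab
        simp only [Prod.mk.injEq] at hab
        funext i
        rcases Fin.eq_zero_or_eq_succ i with rfl | ⟨i', rfl⟩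
        · exact hab.1
        · exact congrFun hab.2 i'
      have := hprod.comp_injective hinj
      refine this.congr fun j => ?_
      simp [Function.comp, Fin.prod_univ_succ]

/-- The orthant is closed. -/
lemma aux_orthant_closed (n : ℕ) : IsClosed (orthant n) := by
  have : orthant n = ⋂ i : Fin n, {x : En n | 0 ≤ x i} := by
    ext x; simp [orthant, Set.mem_iInter]
  rw [this]
  exact isClosed_iInter fun i =>
    isClosed_le continuous_const (EuclideanSpace.proj (𝕜 := ℝ) i).continuous

/-- A linear lower bound for `g` on the orthant. -/
lemma aux_lower_bound {n : ℕ} {g : En n → ℝ} (hg : memB g) {M : ℝ} (hM : 0 < M) :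
    ∃ C : ℝ, 0 ≤ C ∧ ∀ x ∈ orthant n, M * ‖x‖ - C ≤ g x := by
  have hev : ∀ᶠ x : En n in cocompact (En n) ⊓ 𝓟 (orthant n), M ≤ g x / ‖x‖ :=
    hg.2.eventually (eventually_ge_atTop M)
  rw [eventually_inf_principal] at hev
  rw [Filter.eventually_iff, mem_cocompact] at hev
  obtain ⟨K, hK, hKsub⟩ := hev
  obtain ⟨R, hR⟩ := isBounded_iff_forall_norm_le.mp hK.isBounded
  have hKo : IsCompact (K ∩ orthant n) := hK.inter_right (aux_orthant_closed n)
  obtain ⟨B, hB⟩ := hKo.exists_bound_of_continuousOn (hg.1.mono Set.inter_subset_right)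
  refine ⟨max (B + M * max R 0) 0, le_max_right _ _, fun x hx => ?_⟩
  by_cases hxK : x ∈ K
  · have h1 : ‖x‖ ≤ max R 0 := le_trans (hR x hxK) (le_max_left _ _)
    have h2 : |g x| ≤ B := by simpa using hB x ⟨hxK, hx⟩
    have h3 : -B ≤ g x := neg_le_of_abs_le h2
    have h4 : M * ‖x‖ ≤ M * max R 0 := mul_le_mul_of_nonneg_left h1 hM.le
    have h5 : B + M * max R 0 ≤ max (B + M * max R 0) 0 := le_max_left _ _
    linarith
  · have h6 : M ≤ g x / ‖x‖ := hKsub (by simpa using hxK) hx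
    rcases eq_or_lt_of_le (norm_nonneg x) with h0 | h0
    · rw [← h0, div_zero] at h6
      linarith [le_max_right (B + M * max R 0) (0:ℝ), hM]
    · have := (le_div_iff₀ h0).mp h6
      have h7 : (0:ℝ) ≤ max (B + M * max R 0) 0 := le_max_right _ _
      linarith

theorem stmt7 (n : ℕ) (g : En n → ℝ) (hg : memB g) :
    ∀ b > (0:ℝ),
      Summable (fun j : Fin n → ℕ =>
        Real.exp (starC (expComp g) (WithLp.toLp 2 (fun i => (j i : ℝ)))) /
          (b ^ (∑ i, j i) * (∏ i, Nat.factorial (j i) : ℝ))) ∧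
      Summable (fun j : Fin n → ℕ =>
        Real.exp (starC (expComp g) (WithLp.toLp 2 (fun i => (j i : ℝ)))) /
          (b ^ (∑ i, j i) * (Nat.factorial (∑ i, j i) : ℝ))) := by
  intro b hb
  -- First series summable
  have hS1 : Summable (fun j : Fin n → ℕ =>
      Real.exp (starC (expComp g) (WithLp.toLp 2 (fun i => (j i : ℝ)))) /
        (b ^ (∑ i, j i) * (∏ i, Nat.factorial (j i) : ℝ))) := by
    rcases Nat.eq_zero_or_pos n with rfl | hn
    · exact Summable.of_finite
    -- the constant `c = 2 / b`
    set c : ℝ := 2 / b with hc_def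
    have hc : 0 < c := by positivity
    have hM : (0:ℝ) < (n : ℝ) * c := by positivity
    obtain ⟨C, hC0, hC⟩ := aux_lower_bound hg hM
    -- bound on the conjugate
    have hstar : ∀ j : Fin n → ℕ,
        starC (expComp g) (WithLp.toLp 2 (fun i => (j i : ℝ))) ≤
          C + ∑ i, ((j i : ℝ) * Real.log (j i) - (j i : ℝ) - (j i : ℝ) * Real.log c) := by
      intro j
      apply ciSup_le
      intro y
      set t : En n := WithLp.toLp 2 (fun i => Real.exp (y i)) with ht_def
      have htmem : t ∈ orthant n := fun i => (Real.exp_pos (y i)).le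
      have hgt : (n : ℝ) * c * ‖t‖ - C ≤ g t := hC t htmem
      have hsum_norm : ∑ i, t i ≤ (n : ℝ) * ‖t‖ := by
        calc ∑ i, t i ≤ ∑ _i : Fin n, ‖t‖ :=
              Finset.sum_le_sum fun i _ =>
                le_trans (le_abs_self _) (aux_coord_le_norm t i)
          _ = (n : ℝ) * ‖t‖ := by simp [mul_comm]
      have hgt2 : c * ∑ i, t i - C ≤ g t := by
        have : c * ∑ i, t i ≤ (n : ℝ) * c * ‖t‖ := by
          calc c * ∑ i, t i ≤ c * ((n : ℝ) * ‖t‖) := by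
                exact mul_le_mul_of_nonneg_left hsum_norm hc.le
            _ = (n : ℝ) * c * ‖t‖ := by ring
        linarith
      have hexp : expComp g y = g t := rfl
      have hterm : ∀ i : Fin n, (j i : ℝ) * y i - c * t i ≤
          (j i : ℝ) * Real.log (j i) - (j i : ℝ) - (j i : ℝ) * Real.log c := by
        intro i
        exact aux_linear_sub_exp (j i : ℝ) c (y i) (Nat.cast_nonneg _) hc
      calc ∑ i, (j i : ℝ) * y i - expComp g y
          ≤ ∑ i, (j i : ℝ) * y i - (c * ∑ i, t i - C) := by
            rw [hexp]; linarith
        _ = C + ∑ i, ((j i : ℝ) * y i - c * t i) := by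
            rw [Finset.sum_sub_distrib, Finset.mul_sum]; ring
        _ ≤ C + ∑ i, ((j i : ℝ) * Real.log (j i) - (j i : ℝ) - (j i : ℝ) * Real.log c) := by
            exact add_le_add_right (Finset.sum_le_sum fun i _ => hterm i) C
    -- dominate by geometric
    apply Summable.of_nonneg_of_le (f := fun j : Fin n → ℕ =>
        Real.exp C * ∏ i, ((1:ℝ)/2) ^ j i)
    · intro j
      have h1 : (0:ℝ) < b ^ (∑ i, j i) := by positivity
      have h2 : (0:ℝ) < (∏ i, Nat.factorial (j i) : ℝ) := by
        have : 0 < ∏ i, Nat.factorial (j i) :=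
          Finset.prod_pos fun i _ => Nat.factorial_pos _
        exact_mod_cast this
      positivity
    · intro j
      have h1 : (0:ℝ) < b ^ (∑ i, j i) := by positivity
      have h2 : (0:ℝ) < (∏ i, Nat.factorial (j i) : ℝ) := by
        have : 0 < ∏ i, Nat.factorial (j i) :=
          Finset.prod_pos fun i _ => Nat.factorial_pos _
        exact_mod_cast this
      have hE : Real.exp (starC (expComp g) (WithLp.toLp 2 (fun i => (j i : ℝ)))) ≤
          Real.exp C * ∏ i, ((Nat.factorial (j i) : ℝ) * (1/c) ^ j i) := by
        calc Real.exp (starC (expComp g) (WithLp.toLp 2 (fun i => (j i : ℝ))))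
            ≤ Real.exp (C + ∑ i, ((j i : ℝ) * Real.log (j i) - (j i : ℝ)
                - (j i : ℝ) * Real.log c)) := Real.exp_le_exp.mpr (hstar j)
          _ = Real.exp C * ∏ i, Real.exp ((j i : ℝ) * Real.log (j i) - (j i : ℝ)
                - (j i : ℝ) * Real.log c) := by
              rw [Real.exp_add, Real.exp_sum]
          _ ≤ Real.exp C * ∏ i, ((Nat.factorial (j i) : ℝ) * (1/c) ^ j i) := by
              apply mul_le_mul_of_nonneg_left _ (Real.exp_pos C).le
              apply Finset.prod_le_prod (fun i _ => (Real.exp_pos _).le)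
              intro i _
              exact aux_exp_phi_le c hc (j i)
      rw [div_le_iff₀ (by positivity)]
      calc Real.exp (starC (expComp g) (WithLp.toLp 2 (fun i => (j i : ℝ))))
          ≤ Real.exp C * ∏ i, ((Nat.factorial (j i) : ℝ) * (1/c) ^ j i) := hE
        _ = (Real.exp C * ∏ i, ((1:ℝ)/2) ^ j i) *
              (b ^ (∑ i, j i) * (∏ i, Nat.factorial (j i) : ℝ)) := by
            have htm : ∀ i : Fin n, ((Nat.factorial (j i) : ℝ)) * (1/c) ^ j i
                = (1/2 : ℝ) ^ j i * (b ^ j i * (Nat.factorial (j i) : ℝ)) := by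
              intro i
              have hcb : (1:ℝ)/c = b/2 := by rw [hc_def]; field_simp
              rw [hcb, div_pow, one_div, inv_pow]
              field_simp
            calc Real.exp C * ∏ i, ((Nat.factorial (j i) : ℝ) * (1/c) ^ j i)
                = Real.exp C * ∏ i, ((1/2 : ℝ) ^ j i
                    * (b ^ j i * (Nat.factorial (j i) : ℝ))) := by
                  rw [Finset.prod_congr rfl fun i _ => htm i]
              _ = (Real.exp C * ∏ i, ((1:ℝ)/2) ^ j i) *
                    ((∏ i, b ^ j i) * ∏ i, (Nat.factorial (j i) : ℝ)) := by
                  rw [Finset.prod_mul_distrib, Finset.prod_mul_distrib]; ring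
              _ = (Real.exp C * ∏ i, ((1:ℝ)/2) ^ j i) *
                    (b ^ (∑ i, j i) * (∏ i, Nat.factorial (j i) : ℝ)) := by
                  simp only [Finset.prod_pow_eq_pow_sum]
    · exact (aux_geom_summable n (by norm_num) (by norm_num)).mul_left _
  refine ⟨hS1, ?_⟩
  -- second series by comparison with the first
  apply Summable.of_nonneg_of_le _ _ hS1
  · intro j
    have h1 : (0:ℝ) < b ^ (∑ i, j i) := by positivity
    have h2 : (0:ℝ) < (Nat.factorial (∑ i, j i) : ℝ) := by
      exact_mod_cast Nat.factorial_pos _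
    positivity
  · intro j
    have hdvd : (∏ i, Nat.factorial (j i)) ∣ Nat.factorial (∑ i, j i) :=
      Nat.prod_factorial_dvd_factorial_sum _ _
    have hle : (∏ i, Nat.factorial (j i) : ℝ) ≤ (Nat.factorial (∑ i, j i) : ℝ) := by
      exact_mod_cast Nat.le_of_dvd (Nat.factorial_pos _) hdvd
    have h1 : (0:ℝ) < b ^ (∑ i, j i) := by positivity
    have h2 : (0:ℝ) < (∏ i, Nat.factorial (j i) : ℝ) := by
      have : 0 < ∏ i, Nat.factorial (j i) :=
        Finset.prod_pos fun i _ => Nat.factorial_pos _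
      exact_mod_cast this
    apply div_le_div_of_nonneg_left (Real.exp_pos _).le (by positivity)
    exact mul_le_mul_of_nonneg_left hle h1.le
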